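/- The permutation ω_I ∈ S_n defined for I = {i_1 < ... < i_r} by listing the complement of I in increasing order followed by I in decreasing order factors as the product of cycles ω_I = ζ_{i_r} ⋯ ζ_{i_2} ζ_{i_1}, where ζ_{i_k} is the cycle moving the element at position i_k − k + 1 to position n − k + 1 (cyclically shifting positions i_k − k + 1 through n − k + 1). -/

import Mathlib

/-!
STATEMENT 18: The permutation ω_I (one-line word: complement of I ascending,
then I descending) factors as the product of cycles ω_I = ζ_{i_r} ⋯ ζ_{i_1},
where ζ_{i_k} cyclically shifts positions i_k − k + 1 through n − k + 1
(1-indexed).  In 0-indexed terms, ζ_{i_k} is the cycle on positions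
[a, b] = [i_k − k, n − 1 − k + ... ] given below; acting on words by
w ↦ w ∘ ζ it moves the entry at position a to position b.  Composing the word
actions of ζ_{i_1}, then ζ_{i_2}, ..., then ζ_{i_r} on the identity word yields,
as a permutation (position ↦ value), the product ζ^{(0)} * ζ^{(1)} * ⋯ * ζ^{(r−1)}
in Mathlib's composition order, where ζ^{(j)} (j = k−1, 0-indexed) is the cycle
on positions [w_j − j, n − 1 − j] (w_j the j-th smallest element of I).
-/

open Equiv

/-- The cycle of the interval of positions [a, b] (0-indexed) in Fin n sending
t ↦ t+1 for a ≤ t < b and b ↦ a (identity when a ≤ b < n fails).  It is the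
product of adjacent transpositions (a a+1)(a+1 a+2)⋯(b−1 b), with (b−1 b)
applied first. -/
def zeta (n a b : ℕ) : Equiv.Perm (Fin n) :=
  if h : a ≤ b ∧ b < n then
    (List.ofFn (fun t : Fin (b - a) =>
      Equiv.swap (⟨a + t, by omega⟩ : Fin n) ⟨a + t + 1, by omega⟩)).prod
  else 1

/-- ω_I : the permutation sending position k to the k-th entry of the word
"complement of I ascending, then I descending". -/
noncomputable def omegaI {n : ℕ} (I : Finset (Fin n)) : Equiv.Perm (Fin n) :=
  ((finCongr (by
      have h := Finset.card_le_univ I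
      simp only [Finset.card_compl, Fintype.card_fin] at h ⊢
      omega : Iᶜ.card + I.card = n)).symm.trans
    (finSumFinEquiv.symm)).trans <|
  (Equiv.sumCongr (Equiv.refl (Fin Iᶜ.card)) (Fin.revPerm)).trans <|
  (Equiv.sumCongr (Iᶜ.orderIsoOfFin rfl).toEquiv (I.orderIsoOfFin rfl).toEquiv).trans <|
  (Equiv.sumComm _ _).trans <|
  (Equiv.sumCongr (Equiv.refl _)
    (Equiv.subtypeEquivRight (fun x => Finset.mem_compl))).trans <|
  Equiv.sumCompl (· ∈ I)

def chain (n a m : ℕ) (h : a + m < n) : Perm (Fin n) :=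
  (List.ofFn (fun t : Fin m =>
    Equiv.swap (⟨a + t, by omega⟩ : Fin n) ⟨a + t + 1, by omega⟩)).prod

lemma zeta_eq_chain (n a b : ℕ) (hab : a ≤ b) (hb : b < n) :
    zeta n a b = chain n a (b - a) (by omega) := by
  rw [zeta, dif_pos ⟨hab, hb⟩]; rfl

lemma chain_succ (n a m : ℕ) (h : a + (m + 1) < n) :
    chain n a (m + 1) h =
      Equiv.swap (⟨a, by omega⟩ : Fin n) ⟨a + 1, by omega⟩ * chain n (a + 1) m (by omega) := by
  rw [chain, List.ofFn_succ, List.prod_cons, chain]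
  congr 1
  refine congrArg _ (congrArg _ (funext fun t => ?_))
  congr 1 <;> exact Fin.ext (by simp [Fin.val_succ]; omega)

lemma chain_apply (n : ℕ) (m : ℕ) : ∀ (a : ℕ) (h : a + m < n) (x : Fin n),
    (chain n a m h x).val =
      if x.val < a then x.val
      else if x.val < a + m then x.val + 1
      else if x.val = a + m then a else x.val := by
  induction m with
  | zero =>
    intro a h x
    simp only [chain, List.ofFn_zero, List.prod_nil, Perm.coe_one, id_eq]
    split_ifs <;> omega
  | succ m ih =>
    intro a h x
    rw [chain_succ, Perm.mul_apply]
    have hv := ih (a + 1) (by omega) x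
    set y := chain n (a + 1) m (by omega) x with hy
    rw [Equiv.swap_apply_def]
    simp only [apply_ite Fin.val, Fin.ext_iff]
    split_ifs at hv ⊢ <;> omega

lemma zeta_apply (n a b : ℕ) (hab : a ≤ b) (hb : b < n) (x : Fin n) :
    (zeta n a b x).val = if x.val < a then x.val
      else if x.val < b then x.val + 1
      else if x.val = b then a else x.val := by
  rw [zeta_eq_chain n a b hab hb, chain_apply]
  have hba : a + (b - a) = b := by omega
  simp_rw [hba]



lemma card_compl_add {n : ℕ} (I : Finset (Fin n)) : Iᶜ.card + I.card = n := by
  have h := Finset.card_le_univ I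
  simp only [Finset.card_compl, Fintype.card_fin] at h ⊢
  omega

lemma omegaI_apply_lt {n : ℕ} (I : Finset (Fin n)) (k : Fin n) (h : k.val < Iᶜ.card) :
    omegaI I k = Iᶜ.orderEmbOfFin rfl ⟨k.val, h⟩ := by
  unfold omegaI
  simp only [Equiv.trans_apply]
  have h1 : (finSumFinEquiv.symm ((finCongr (card_compl_add I)).symm k)) =
      Sum.inl ⟨k.val, h⟩ := by
    rw [Equiv.symm_apply_eq]
    simp [finSumFinEquiv_apply_left]
    rfl
  rw [h1]
  simp only [Equiv.sumCongr_apply, Sum.map_inl, Equiv.refl_apply, Equiv.sumComm_apply,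
    Sum.swap_inl, Sum.map_inr, Sum.map_inl, Equiv.sumCompl_apply_inr,
    Equiv.sumCompl_apply_inl, Equiv.subtypeEquivRight_apply,
    Finset.coe_orderIsoOfFin_apply]
  rfl

lemma omegaI_apply_ge {n : ℕ} (I : Finset (Fin n)) (k : Fin n) (h : ¬ k.val < Iᶜ.card)
    (h2 : n - 1 - k.val < I.card) :
    omegaI I k = I.orderEmbOfFin rfl ⟨n - 1 - k.val, h2⟩ := by
  unfold omegaI
  simp only [Equiv.trans_apply]
  have h1 : (finSumFinEquiv.symm ((finCongr (card_compl_add I)).symm k)) =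
      Sum.inr ⟨k.val - Iᶜ.card, by have := card_compl_add I; have := k.2; omega⟩ := by
    rw [Equiv.symm_apply_eq]
    simp [finSumFinEquiv_apply_right]
    exact Fin.ext (by simp; omega)
  rw [h1]
  have hrev : (Fin.revPerm ⟨k.val - Iᶜ.card, by have := card_compl_add I; have := k.2; omega⟩ :
      Fin I.card) = ⟨n - 1 - k.val, h2⟩ := by
    apply Fin.ext
    simp [Fin.rev]
    have := card_compl_add I
    have := k.2
    omega
  simp only [Equiv.sumCongr_apply, Sum.map_inr, Fin.revPerm_apply] at *
  rw [hrev]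
  simp only [Equiv.sumCongr_apply, Sum.map_inr, Equiv.refl_apply, Equiv.sumComm_apply,
    Sum.swap_inr, Sum.map_inr, Sum.map_inl, Equiv.sumCompl_apply_inr,
    Equiv.sumCompl_apply_inl, Equiv.subtypeEquivRight_apply,
    Finset.coe_orderIsoOfFin_apply]
  rfl


variable {n r : ℕ} {I : Finset (Fin n)}

lemma card_compl_add' (I : Finset (Fin n)) : Iᶜ.card + I.card = n := by
  have h := Finset.card_le_univ I
  simp only [Finset.card_compl, Fintype.card_fin] at h ⊢
  omega

lemma r_le_M (hI : I.card = r + 1) (hne : I.Nonempty) : r < (I.max' hne).val + 1 := by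
  have hsub : I ⊆ Finset.Iic (I.max' hne) := fun x hx => Finset.mem_Iic.mpr (I.le_max' x hx)
  have := Finset.card_le_card hsub
  rw [hI, Fin.card_Iic] at this
  omega

lemma max'_eq_emb_last (hI : I.card = r + 1) (hne : I.Nonempty) :
    I.orderEmbOfFin hI ⟨r, by omega⟩ = I.max' hne := by
  have := Finset.orderEmbOfFin_last hI (Nat.succ_pos r)
  simpa using this

lemma erase_emb (hI : I.card = r + 1) (hne : I.Nonempty)
    (hI' : (I.erase (I.max' hne)).card = r) (j : ℕ) (hj : j < r) :
    (I.erase (I.max' hne)).orderEmbOfFin hI' ⟨j, hj⟩ = I.orderEmbOfFin hI ⟨j, by omega⟩ := by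
  have huniq := Finset.orderEmbOfFin_unique (f := fun jj : Fin r =>
      I.orderEmbOfFin hI ⟨jj.val, by omega⟩) hI'
    (fun jj => by
      rw [Finset.mem_erase]
      refine ⟨?_, Finset.orderEmbOfFin_mem _ _ _⟩
      intro hcon
      have h5 := congrArg Fin.val ((I.orderEmbOfFin hI).injective
        (hcon.trans (max'_eq_emb_last hI hne).symm))
      simp only [Fin.val_mk] at h5
      omega)
    (fun j1 j2 h12 => (I.orderEmbOfFin hI).strictMono (Fin.mk_lt_mk.mpr h12))
  exact (congrFun huniq ⟨j, hj⟩).symm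

lemma filter_lt_max_card (hI : I.card = r + 1) (hne : I.Nonempty) :
    (Iᶜ.filter (· < I.max' hne)).card = (I.max' hne).val - r := by
  set M := I.max' hne with hM
  have h1 : Iᶜ.filter (· < M) = Finset.Iio M \ I := by
    ext x
    simp only [Finset.mem_filter, Finset.mem_compl, Finset.mem_sdiff, Finset.mem_Iio]
    tauto
  have h2 : Finset.Iio M ∩ I = I.erase M := by
    ext x
    simp only [Finset.mem_inter, Finset.mem_Iio, Finset.mem_erase]
    constructor
    · rintro ⟨hx, hxI⟩; exact ⟨fun hcon => by subst hcon; exact lt_irrefl _ hx, hxI⟩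
    · rintro ⟨hx, hxI⟩
      exact ⟨lt_of_le_of_ne (I.le_max' x hxI) (by simpa using hx), hxI⟩
  have h3 := Finset.card_sdiff_add_card_inter (Finset.Iio M) I
  rw [h2, Finset.card_erase_of_mem (I.max'_mem hne), hI, Fin.card_Iio] at h3
  rw [h1]
  omega

lemma emb_lt_max_iff {c : ℕ} (hI : I.card = r + 1) (hne : I.Nonempty) (hc : Iᶜ.card = c)
    (k : Fin c) :
    Iᶜ.orderEmbOfFin hc k < I.max' hne ↔ k.val < (I.max' hne).val - r := by
  set M := I.max' hne with hM
  set e := Iᶜ.orderEmbOfFin hc with he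
  set P := Finset.univ.filter (fun k : Fin c => e k < M) with hP
  have himg : P.image e = Iᶜ.filter (· < M) := by
    ext y
    simp only [Finset.mem_image, hP, Finset.mem_filter, Finset.mem_univ, true_and]
    constructor
    · rintro ⟨kk, hkk, rfl⟩
      exact ⟨Finset.orderEmbOfFin_mem _ _ _, hkk⟩
    · rintro ⟨hy, hyM⟩
      have : y ∈ Set.range e := by rw [Finset.range_orderEmbOfFin]; exact hy
      obtain ⟨kk, rfl⟩ := this
      exact ⟨kk, hyM, rfl⟩
  have hcardP : P.card = M.val - r := by
    rw [← filter_lt_max_card hI hne, ← himg,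
      Finset.card_image_of_injective _ (e.injective)]
  have hdown : ∀ k1 k2 : Fin c, k1 ≤ k2 → k2 ∈ P → k1 ∈ P := by
    intro k1 k2 h12 h2
    simp only [hP, Finset.mem_filter, Finset.mem_univ, true_and] at h2 ⊢
    exact lt_of_le_of_lt (e.monotone h12) h2
  constructor
  · intro hlt
    have hsub : Finset.Iic k ⊆ P := fun j hj =>
      hdown j k (Finset.mem_Iic.mp hj) (by simp [hP, hlt])
    have := Finset.card_le_card hsub
    rw [Fin.card_Iic, hcardP] at this
    omega
  · intro hlt
    by_contra hcon
    have hsub : P ⊆ Finset.Iio k := by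
      intro j hj
      rw [Finset.mem_Iio]
      by_contra hjk
      have := hdown k j (le_of_not_gt hjk) hj
      simp only [hP, Finset.mem_filter, Finset.mem_univ, true_and] at this
      exact hcon this
    have := Finset.card_le_card hsub
    rw [Fin.card_Iio, hcardP] at this
    omega

lemma emb_ne_max {c : ℕ} (hne : I.Nonempty) (hc : Iᶜ.card = c) (k : Fin c) :
    Iᶜ.orderEmbOfFin hc k ≠ I.max' hne := by
  intro hcon
  have := Finset.orderEmbOfFin_mem Iᶜ hc k
  rw [hcon] at this
  exact (Finset.mem_compl.mp this) (I.max'_mem hne)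

lemma compl_erase_emb {c : ℕ} (hI : I.card = r + 1) (hne : I.Nonempty) (hc : Iᶜ.card = c)
    (hc' : ((I.erase (I.max' hne))ᶜ).card = c + 1)
    (hacn : (I.max' hne).val - r ≤ c ∧ c + (r + 1) = n) (k : Fin (c + 1)) :
    ((I.erase (I.max' hne))ᶜ).orderEmbOfFin hc' k =
      if hk : k.val < (I.max' hne).val - r then Iᶜ.orderEmbOfFin hc ⟨k.val, by omega⟩
      else if hk2 : k.val = (I.max' hne).val - r then I.max' hne
      else Iᶜ.orderEmbOfFin hc ⟨k.val - 1, by have := k.2; omega⟩ := by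
  set M := I.max' hne with hM
  set a := M.val - r with ha
  set e := Iᶜ.orderEmbOfFin hc with he
  set f : Fin (c + 1) → Fin n := fun k =>
    if hk : k.val < a then e ⟨k.val, by omega⟩
    else if hk2 : k.val = a then M
    else e ⟨k.val - 1, by have := k.2; omega⟩ with hf
  have hmem : ∀ x, f x ∈ (I.erase M)ᶜ := by
    intro x
    rw [Finset.mem_compl, Finset.mem_erase]
    simp only [hf]
    split_ifs with h1 h2
    · rintro ⟨-, hmem⟩
      exact Finset.mem_compl.mp (Finset.orderEmbOfFin_mem _ _ _) hmem
    · rintro ⟨hne2, -⟩; exact hne2 rfl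
    · rintro ⟨-, hmem⟩
      exact Finset.mem_compl.mp (Finset.orderEmbOfFin_mem _ _ _) hmem
  have hmono : StrictMono f := by
    intro k1 k2 h12
    have h12' : k1.val < k2.val := h12
    simp only [hf]
    split_ifs with h1 h2 h3 h4 h5 h6 h7 h8
    all_goals try omega
    · exact e.strictMono (Fin.mk_lt_mk.mpr h12')
    · exact (emb_lt_max_iff hI hne hc _).mpr h1
    · exact e.strictMono (Fin.mk_lt_mk.mpr (by omega))
    · -- k1 = a, k2 > a : M < e ⟨k2-1⟩
      have hge := (emb_lt_max_iff hI hne hc ⟨k2.val - 1, by have := k2.2; omega⟩).not.mpr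
        (by simp only [Fin.val_mk]; omega)
      have hne3 := emb_ne_max hne hc ⟨k2.val - 1, by have := k2.2; omega⟩
      exact lt_of_le_of_ne (not_lt.mp hge) (Ne.symm hne3)
    · exact e.strictMono (Fin.mk_lt_mk.mpr (by omega))
  have huniq := Finset.orderEmbOfFin_unique hc' hmem hmono
  exact (congrFun huniq k).symm

lemma omegaI_peel {n r : ℕ} {I : Finset (Fin n)} (hI : I.card = r + 1) (hne : I.Nonempty) :
    omegaI I = omegaI (I.erase (I.max' hne)) *
      zeta n ((I.max' hne).val - r) (n - 1 - r) := by
  set M := I.max' hne with hM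
  set I' := I.erase M with hI'def
  set c := Iᶜ.card with hcdef
  have hcn : c + (r + 1) = n := by rw [hcdef, ← hI]; exact card_compl_add' I
  have hI' : I'.card = r := by
    rw [hI'def, Finset.card_erase_of_mem (I.max'_mem hne), hI]
    omega
  have hc' : I'ᶜ.card = c + 1 := by
    have := card_compl_add' I'
    rw [hI'] at this
    omega
  have hMn : M.val < n := M.2
  have hrM : r ≤ M.val := by have := r_le_M hI hne; omega
  have hac : M.val - r ≤ c ∧ c + (r + 1) = n := ⟨by omega, hcn⟩
  set a := M.val - r with hadef
  have hbc : n - 1 - r = c := by omega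
  have hab : a ≤ n - 1 - r := by omega
  have hbn : n - 1 - r < n := by omega
  refine Equiv.ext fun x => ?_
  rw [Perm.mul_apply]
  have hyv := zeta_apply n a (n - 1 - r) hab hbn x
  set y := zeta n a (n - 1 - r) x with hy
  rcases lt_or_ge x.val a with h1 | h1
  · -- x < a
    have hyx : y = x := Fin.ext (by rw [hyv, if_pos h1])
    rw [hyx]
    rw [omegaI_apply_lt I x (by omega), omegaI_apply_lt I' x (by omega)]
    rw [show (Finset.orderEmbOfFin I'ᶜ rfl) ⟨x.val, by omega⟩ =
        (Finset.orderEmbOfFin I'ᶜ hc') ⟨x.val, by omega⟩ from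
      Finset.orderEmbOfFin_eq_orderEmbOfFin_iff.mpr rfl]
    rw [compl_erase_emb hI hne rfl hc' hac]
    rw [dif_pos (by simpa using h1)]
  · rcases lt_or_ge x.val (n - 1 - r) with h2 | h2
    · -- a ≤ x < b : y = x+1
      have hyval : y.val = x.val + 1 := by rw [hyv, if_neg (by omega), if_pos h2]
      rw [omegaI_apply_lt I x (by omega), omegaI_apply_lt I' y (by omega)]
      rw [show (Finset.orderEmbOfFin I'ᶜ rfl) ⟨y.val, by omega⟩ =
          (Finset.orderEmbOfFin I'ᶜ hc') ⟨x.val + 1, by omega⟩ from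
        Finset.orderEmbOfFin_eq_orderEmbOfFin_iff.mpr (by simpa using hyval)]
      rw [compl_erase_emb hI hne rfl hc' hac]
      rw [dif_neg (by simp; omega), dif_neg (by simp; omega)]
      exact (Finset.orderEmbOfFin_eq_orderEmbOfFin_iff.mpr (by simp)).symm
    · rcases eq_or_lt_of_le h2 with h3 | h3
      · -- x = b : y = a, LHS = M
        have hyval : y.val = a := by rw [hyv, if_neg (by omega), if_neg (by omega), if_pos (by omega)]
        rw [omegaI_apply_ge I x (by omega) (by omega), omegaI_apply_lt I' y (by omega)]
        rw [show (Finset.orderEmbOfFin I'ᶜ rfl) ⟨y.val, by omega⟩ =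
            (Finset.orderEmbOfFin I'ᶜ hc') ⟨a, by omega⟩ from
          Finset.orderEmbOfFin_eq_orderEmbOfFin_iff.mpr (by simpa using hyval)]
        rw [compl_erase_emb hI hne rfl hc' hac]
        rw [dif_neg (by simp [← hM] <;> omega), dif_pos (by simp [← hM] <;> omega)]
        rw [show (Finset.orderEmbOfFin I rfl) ⟨n - 1 - x.val, by omega⟩ =
            (Finset.orderEmbOfFin I hI) ⟨r, by omega⟩ from
          Finset.orderEmbOfFin_eq_orderEmbOfFin_iff.mpr (by simp; omega)]
        exact max'_eq_emb_last hI hne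
      · -- x > b : y = x
        have hyx : y = x := Fin.ext (by rw [hyv, if_neg (by omega), if_neg (by omega), if_neg (by omega)])
        rw [hyx]
        rw [omegaI_apply_ge I x (by omega) (by omega),
          omegaI_apply_ge I' x (by omega) (by rw [hI']; omega)]
        rw [show (Finset.orderEmbOfFin I' rfl) ⟨n - 1 - x.val, by rw [hI']; omega⟩ =
            (Finset.orderEmbOfFin I' hI') ⟨n - 1 - x.val, by omega⟩ from
          Finset.orderEmbOfFin_eq_orderEmbOfFin_iff.mpr rfl]
        rw [erase_emb hI hne hI' (n - 1 - x.val) (by omega)]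
        exact Finset.orderEmbOfFin_eq_orderEmbOfFin_iff.mpr rfl

lemma omegaI_empty : omegaI (∅ : Finset (Fin n)) = 1 := by
  have hc : (∅ : Finset (Fin n))ᶜ.card = n := by simp
  refine Equiv.ext fun x => ?_
  rw [omegaI_apply_lt ∅ x (by rw [hc]; exact x.2)]
  have huniq := Finset.orderEmbOfFin_unique (f := fun j : Fin n => (⟨j.val, j.2⟩ : Fin n)) hc
    (fun j => by simp) (fun j1 j2 h12 => Fin.mk_lt_mk.mpr h12)
  have h1 : (Finset.orderEmbOfFin (∅ : Finset (Fin n))ᶜ rfl) ⟨x.val, by rw [hc]; exact x.2⟩ =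
      (Finset.orderEmbOfFin (∅ : Finset (Fin n))ᶜ hc) ⟨x.val, x.2⟩ :=
    Finset.orderEmbOfFin_eq_orderEmbOfFin_iff.mpr rfl
  rw [h1, ← huniq]
  rfl


theorem omegaI_cycle_factorization {n : ℕ} (I : Finset (Fin n)) :
    omegaI I =
      (List.ofFn (fun j : Fin I.card =>
        zeta n ((I.orderIsoOfFin rfl j : Fin n) - (j : ℕ)) (n - 1 - (j : ℕ)))).prod := by
  suffices H : ∀ (m : ℕ) (I : Finset (Fin n)), I.card = m → omegaI I =
      (List.ofFn (fun j : Fin I.card =>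
        zeta n ((I.orderIsoOfFin rfl j : Fin n) - (j : ℕ)) (n - 1 - (j : ℕ)))).prod from
    H I.card I rfl
  intro m
  induction m with
  | zero =>
    intro I hI
    rw [List.ofFn_congr hI, List.ofFn_zero, List.prod_nil,
      Finset.card_eq_zero.mp hI, omegaI_empty]
  | succ r ih =>
    intro I hI
    have hne : I.Nonempty := Finset.card_pos.mp (by omega)
    have hI' : (I.erase (I.max' hne)).card = r := by
      rw [Finset.card_erase_of_mem (I.max'_mem hne), hI]; omega
    rw [omegaI_peel hI hne, ih (I.erase (I.max' hne)) hI']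
    simp only [Finset.coe_orderIsoOfFin_apply]
    rw [List.ofFn_congr hI, List.ofFn_congr hI', List.ofFn_succ', List.prod_concat]
    congr 1
    · refine congrArg _ (congrArg _ (funext fun j => ?_))
      have hval : ((I.erase (I.max' hne)).orderEmbOfFin rfl (Fin.cast hI'.symm j) : Fin n) =
          I.orderEmbOfFin rfl (Fin.cast hI.symm j.castSucc) := by
        rw [show ((I.erase (I.max' hne)).orderEmbOfFin rfl (Fin.cast hI'.symm j)) =
            ((I.erase (I.max' hne)).orderEmbOfFin hI' ⟨j.val, j.2⟩) from
          Finset.orderEmbOfFin_eq_orderEmbOfFin_iff.mpr rfl]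
        rw [erase_emb hI hne hI' j.val j.2]
        exact Finset.orderEmbOfFin_eq_orderEmbOfFin_iff.mpr rfl
      simp only [Fin.coe_cast, Fin.coe_castSucc]
      rw [hval]
    · have hval : (I.orderEmbOfFin rfl (Fin.cast hI.symm (Fin.last r)) : Fin n) = I.max' hne := by
        rw [show (I.orderEmbOfFin rfl (Fin.cast hI.symm (Fin.last r))) =
            (I.orderEmbOfFin hI ⟨r, by omega⟩) from
          Finset.orderEmbOfFin_eq_orderEmbOfFin_iff.mpr rfl]
        exact max'_eq_emb_last hI hne
      simp only [Fin.coe_cast, Fin.val_last]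
      rw [hval]
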